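/- Let a > 0, γ > 0, D = a·ln n, and p = γ/x₂ where x₂ > 1 is the unique solution in (1, ∞) of J(x) = 1/(aγ) with J(x) = ln x − 1 + 1/x. Then for any p' with 0 < p' < p, we have p'·a·H(γ/p') > 1, where H(x) = x·ln x − x + 1. -/

import Mathlib

noncomputable def H (x : ℝ) : ℝ := x * Real.log x - x + 1

noncomputable def J (x : ℝ) : ℝ := Real.log x - 1 + 1 / x

lemma J_strictMonoOn : StrictMonoOn J (Set.Ici 1) := by
  have hderiv : ∀ x : ℝ, 0 < x → HasDerivAt J (x⁻¹ - (x ^ 2)⁻¹) x := by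
    intro x hx
    have h1 := (Real.hasDerivAt_log hx.ne').sub_const 1
    have h2 := hasDerivAt_inv hx.ne'
    have h := h1.add h2
    unfold J
    simpa [one_div, sub_eq_add_neg, Pi.add_def] using h
  apply strictMonoOn_of_deriv_pos (convex_Ici 1)
  · intro x hx
    exact ((hderiv x (lt_of_lt_of_le one_pos hx)).continuousAt).continuousWithinAt
  · intro x hx
    rw [interior_Ici] at hx
    have hx0 : (0:ℝ) < x := lt_trans one_pos hx
    rw [(hderiv x hx0).deriv]
    have : (x ^ 2)⁻¹ < x⁻¹ := by
      apply inv_strictAnti₀ hx0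
      nlinarith [Set.mem_Ioi.mp hx]
    linarith

theorem stable_condition_below_pprime (a γ x₂ p : ℝ) (ha : 0 < a) (hγ : 0 < γ)
    (hx₂ : 1 < x₂) (hroot : J x₂ = 1 / (a * γ)) (hp : p = γ / x₂) :
    ∀ p' : ℝ, 0 < p' → p' < p → 1 < p' * a * H (γ / p') := by
  intro p' hp' hp'p
  set x' := γ / p' with hx'
  have hx₂0 : (0:ℝ) < x₂ := lt_trans one_pos hx₂
  have hxgt : x₂ < x' := by
    rw [hx', lt_div_iff₀ hp']
    rw [hp, lt_div_iff₀ hx₂0] at hp'p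
    linarith [hp'p]
  have hx'0 : (0:ℝ) < x' := lt_trans hx₂0 hxgt
  have hJ : J x₂ < J x' := J_strictMonoOn (le_of_lt hx₂) (le_of_lt (lt_trans hx₂ hxgt)) hxgt
  have hHJ : H x' = x' * J x' := by
    simp only [H, J]
    rw [mul_add, mul_sub, mul_one_div_cancel hx'0.ne']
    ring
  have hpx : p' * x' = γ := by
    rw [hx']
    field_simp
  have key : 1 < a * γ * J x' := by
    have h1 : a * γ * J x₂ = 1 := by
      rw [hroot]; field_simp
    have hag : 0 < a * γ := mul_pos ha hγ
    nlinarith [mul_lt_mul_of_pos_left hJ hag]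
  calc 1 < a * γ * J x' := key
    _ = p' * a * H x' := by rw [hHJ, ← hpx]; ring
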